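/- Let c2, c3, c4, c5, c0 be real constants and define u : ℝ² → ℝ by u(t,x) = (c2·t)/2 + (x + Real.log t + c0)/t for t > 0. Then for all t > 0 and all x, u satisfies the PDE ∂u/∂t + u·(∂u/∂x) + c3·(∂²u/∂x²) − (∂u/∂x)² + c4·(∂³u/∂x³) + c5·(∂⁴u/∂x⁴) − c2 = 0. -/
import Mathlib


theorem stmt_0 (c2 c3 c4 c5 c0 : ℝ) (u : ℝ → ℝ → ℝ)
    (hu : ∀ t x : ℝ, 0 < t → u t x = c2 * t / 2 + (x + Real.log t + c0) / t) :
    ∀ t x : ℝ, 0 < t →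
      deriv (fun s => u s x) t
        + u t x * deriv (fun y => u t y) x
        + c3 * iteratedDeriv 2 (fun y => u t y) x
        - (deriv (fun y => u t y) x) ^ 2
        + c4 * iteratedDeriv 3 (fun y => u t y) x
        + c5 * iteratedDeriv 4 (fun y => u t y) x
        - c2 = 0 := by
  intro t x ht
  have ht' : t ≠ 0 := ne_of_gt ht
  have hfun : (fun y => u t y) = fun y => c2 * t / 2 + (y + Real.log t + c0) / t :=
    funext fun y => hu t y ht
  -- spatial first derivative
  have hdx : ∀ y : ℝ, HasDerivAt (fun y => c2 * t / 2 + (y + Real.log t + c0) / t) (1 / t) y := by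
    intro y
    have h1 : HasDerivAt (fun y : ℝ => (y + Real.log t + c0) / t) (1 / t) y := by
      simpa using (((hasDerivAt_id y).add_const (Real.log t)).add_const c0).div_const t
    simpa using h1.const_add (c2 * t / 2)
  have hderivx : deriv (fun y => u t y) = fun _ => 1 / t := by
    rw [hfun]; exact funext fun y => (hdx y).deriv
  have hux : deriv (fun y => u t y) x = 1 / t := by rw [hderivx]
  -- higher spatial derivatives vanish
  have h2 : iteratedDeriv 2 (fun y => u t y) = fun _ => 0 := by
    rw [iteratedDeriv_succ, iteratedDeriv_one, hderivx]
    funext y; simp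
  have h3 : iteratedDeriv 3 (fun y => u t y) = fun _ => 0 := by
    rw [iteratedDeriv_succ, h2]; funext y; simp
  have h4 : iteratedDeriv 4 (fun y => u t y) = fun _ => 0 := by
    rw [iteratedDeriv_succ, h3]; funext y; simp
  -- time derivative
  have hg : HasDerivAt (fun s => c2 * s / 2 + (x + Real.log s + c0) / s)
      (c2 / 2 + ((1 / t) * t - (x + Real.log t + c0) * 1) / t ^ 2) t := by
    have h1 : HasDerivAt (fun s : ℝ => c2 * s / 2) (c2 / 2) t := by
      simpa using ((hasDerivAt_id t).const_mul c2).div_const 2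
    have hnum : HasDerivAt (fun s : ℝ => x + Real.log s + c0) (1 / t) t := by
      simpa using ((Real.hasDerivAt_log ht').const_add x).add_const c0
    exact h1.add (hnum.div (hasDerivAt_id t) ht')
  have heq : (fun s => u s x) =ᶠ[nhds t] fun s => c2 * s / 2 + (x + Real.log s + c0) / s := by
    filter_upwards [eventually_gt_nhds ht] with s hs
    exact hu s x hs
  have hut : deriv (fun s => u s x) t
      = c2 / 2 + ((1 / t) * t - (x + Real.log t + c0) * 1) / t ^ 2 := by
    rw [heq.deriv_eq]; exact hg.deriv
  rw [hut, hux, h2, h3, h4, hu t x ht]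
  field_simp
  ring
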